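/- arXiv:2110.13704 — 2 statements merged into one kernel-verified Lean document; each statement's English description precedes it below -/
import Mathlib

section
/- In the lambda calculus with pair/fst/snd constructors as above, the proof-irrelevance step relation generated by pair(T,P,m,h₀) ↔ pair(T,P,m,h₁) (closed under contexts and substitution) can be postponed over βπ-reduction: if t ↔_pi u and u →_{βπ} v, then there exists w with t →_{βπ}= w and w ↔_pi* v, where →_{βπ}= is the reflexive closure of one-step βπ-reduction and ↔_pi* the reflexive-transitive closure of ↔_pi. -/
/-- Untyped λ-terms (de Bruijn) extended with a 4-ary pair constructor and
3-ary left/right projections. -/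
inductive Tm : Type
  | var : Nat → Tm
  | app : Tm → Tm → Tm
  | lam : Tm → Tm → Tm                 -- λ(x : T). M
  | pair : Tm → Tm → Tm → Tm → Tm      -- ⟨T, P, m, h⟩
  | fst : Tm → Tm → Tm → Tm            -- π₁(T, P, m)
  | snd : Tm → Tm → Tm → Tm            -- π₂(T, P, m)

namespace Tm

/-- Shift the free variables `≥ k` by `d`. -/
def lift (d k : Nat) : Tm → Tm
  | var n => if n < k then var n else var (n + d)
  | app m n => app (lift d k m) (lift d k n)
  | lam t m => lam (lift d k t) (lift d (k + 1) m)
  | pair t p m h => pair (lift d k t) (lift d k p) (lift d k m) (lift d k h)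
  | fst t p m => fst (lift d k t) (lift d k p) (lift d k m)
  | snd t p m => snd (lift d k t) (lift d k p) (lift d k m)

/-- Capture-avoiding substitution of `s` for variable `k`. -/
def subst (k : Nat) (s : Tm) : Tm → Tm
  | var n => if n = k then lift k 0 s else if k < n then var (n - 1) else var n
  | app m n => app (subst k s m) (subst k s n)
  | lam t m => lam (subst k s t) (subst (k + 1) s m)
  | pair t p m h => pair (subst k s t) (subst k s p) (subst k s m) (subst k s h)
  | fst t p m => fst (subst k s t) (subst k s p) (subst k s m)
  | snd t p m => snd (subst k s t) (subst k s p) (subst k s m)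

/-- One-step βπ-reduction: β plus `fst(T₀,P₀,⟨T₁,P₁,m,h⟩) → m`,
closed under contexts. -/
inductive Step : Tm → Tm → Prop
  | beta (t m n : Tm) : Step (app (lam t m) n) (subst 0 n m)
  | proj (t₀ p₀ t₁ p₁ m h : Tm) : Step (fst t₀ p₀ (pair t₁ p₁ m h)) m
  | appL {m m'} (n) : Step m m' → Step (app m n) (app m' n)
  | appR (m) {n n'} : Step n n' → Step (app m n) (app m n')
  | lamT {t t'} (m) : Step t t' → Step (lam t m) (lam t' m)
  | lamM (t) {m m'} : Step m m' → Step (lam t m) (lam t m')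
  | pair₁ {t t'} (p m h) : Step t t' → Step (pair t p m h) (pair t' p m h)
  | pair₂ (t) {p p'} (m h) : Step p p' → Step (pair t p m h) (pair t p' m h)
  | pair₃ (t p) {m m'} (h) : Step m m' → Step (pair t p m h) (pair t p m' h)
  | pair₄ (t p m) {h h'} : Step h h' → Step (pair t p m h) (pair t p m h')
  | fst₁ {t t'} (p m) : Step t t' → Step (fst t p m) (fst t' p m)
  | fst₂ (t) {p p'} (m) : Step p p' → Step (fst t p m) (fst t p' m)
  | fst₃ (t p) {m m'} : Step m m' → Step (fst t p m) (fst t p m')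
  | snd₁ {t t'} (p m) : Step t t' → Step (snd t p m) (snd t' p m)
  | snd₂ (t) {p p'} (m) : Step p p' → Step (snd t p m) (snd t p' m)
  | snd₃ (t p) {m m'} : Step m m' → Step (snd t p m) (snd t p m')

/-- One-step proof-irrelevance relation: change the proof component of a pair,
closed under contexts. It is symmetric by construction. -/
inductive PiStep : Tm → Tm → Prop
  | pi (t p m h₀ h₁ : Tm) : PiStep (pair t p m h₀) (pair t p m h₁)
  | appL {m m'} (n) : PiStep m m' → PiStep (app m n) (app m' n)
  | appR (m) {n n'} : PiStep n n' → PiStep (app m n) (app m n')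
  | lamT {t t'} (m) : PiStep t t' → PiStep (lam t m) (lam t' m)
  | lamM (t) {m m'} : PiStep m m' → PiStep (lam t m) (lam t m')
  | pair₁ {t t'} (p m h) : PiStep t t' → PiStep (pair t p m h) (pair t' p m h)
  | pair₂ (t) {p p'} (m h) : PiStep p p' → PiStep (pair t p m h) (pair t p' m h)
  | pair₃ (t p) {m m'} (h) : PiStep m m' → PiStep (pair t p m h) (pair t p m' h)
  | fst₁ {t t'} (p m) : PiStep t t' → PiStep (fst t p m) (fst t' p m)
  | fst₂ (t) {p p'} (m) : PiStep p p' → PiStep (fst t p m) (fst t p' m)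
  | fst₃ (t p) {m m'} : PiStep m m' → PiStep (fst t p m) (fst t p m')
  | snd₁ {t t'} (p m) : PiStep t t' → PiStep (snd t p m) (snd t' p m)
  | snd₂ (t) {p p'} (m) : PiStep p p' → PiStep (snd t p m) (snd t p' m)
  | snd₃ (t p) {m m'} : PiStep m m' → PiStep (snd t p m) (snd t p m')

end Tm

open Relation

namespace Tm

theorem PiStep.lift_cong {d k : Nat} {m m' : Tm} (h : PiStep m m') :
    PiStep (Tm.lift d k m) (Tm.lift d k m') := by
  induction h generalizing k <;> simp only [Tm.lift] <;> constructor <;> apply_assumption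

theorem PiStep.subst_left {k : Nat} {s m m' : Tm} (h : PiStep m m') :
    PiStep (Tm.subst k s m) (Tm.subst k s m') := by
  induction h generalizing k <;> simp only [Tm.subst] <;> constructor <;> apply_assumption

open Relation in
theorem PiStep.subst_right {s s' : Tm} (hs : PiStep s s') :
    ∀ (m : Tm) (k : Nat), ReflTransGen PiStep (Tm.subst k s m) (Tm.subst k s' m) := by
  intro m
  induction m with
  | var n =>
    intro k
    simp only [Tm.subst]
    split
    · exact ReflTransGen.single hs.lift_cong
    · exact ReflTransGen.refl
  | app m n ihm ihn =>
    intro k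
    simp only [Tm.subst]
    exact ((ihm k).lift (fun x => Tm.app x (Tm.subst k s n)) fun _ _ h => PiStep.appL _ h).trans
      ((ihn k).lift (fun x => Tm.app (Tm.subst k s' m) x) fun _ _ h => PiStep.appR _ h)
  | lam t m iht ihm =>
    intro k
    simp only [Tm.subst]
    exact ((iht k).lift (fun x => Tm.lam x (Tm.subst (k+1) s m)) fun _ _ h => PiStep.lamT _ h).trans
      ((ihm (k+1)).lift (fun x => Tm.lam (Tm.subst k s' t) x) fun _ _ h => PiStep.lamM _ h)
  | pair t p m h iht ihp ihm ihh =>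
    intro k
    simp only [Tm.subst]
    exact (((iht k).lift (fun x => Tm.pair x (Tm.subst k s p) (Tm.subst k s m) (Tm.subst k s h))
        fun _ _ hh => PiStep.pair₁ _ _ _ hh).trans
      (((ihp k).lift (fun x => Tm.pair (Tm.subst k s' t) x (Tm.subst k s m) (Tm.subst k s h))
        fun _ _ hh => PiStep.pair₂ _ _ _ hh).trans
       ((ihm k).lift (fun x => Tm.pair (Tm.subst k s' t) (Tm.subst k s' p) x (Tm.subst k s h))
        fun _ _ hh => PiStep.pair₃ _ _ _ hh))).trans
      (ReflTransGen.single (PiStep.pi _ _ _ _ _))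
  | fst t p m iht ihp ihm =>
    intro k
    simp only [Tm.subst]
    exact (((iht k).lift (fun x => Tm.fst x (Tm.subst k s p) (Tm.subst k s m))
        fun _ _ hh => PiStep.fst₁ _ _ hh).trans
      ((ihp k).lift (fun x => Tm.fst (Tm.subst k s' t) x (Tm.subst k s m))
        fun _ _ hh => PiStep.fst₂ _ _ hh)).trans
      ((ihm k).lift (fun x => Tm.fst (Tm.subst k s' t) (Tm.subst k s' p) x)
        fun _ _ hh => PiStep.fst₃ _ _ hh)
  | snd t p m iht ihp ihm =>
    intro k
    simp only [Tm.subst]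
    exact (((iht k).lift (fun x => Tm.snd x (Tm.subst k s p) (Tm.subst k s m))
        fun _ _ hh => PiStep.snd₁ _ _ hh).trans
      ((ihp k).lift (fun x => Tm.snd (Tm.subst k s' t) x (Tm.subst k s m))
        fun _ _ hh => PiStep.snd₂ _ _ hh)).trans
      ((ihm k).lift (fun x => Tm.snd (Tm.subst k s' t) (Tm.subst k s' p) x)
        fun _ _ hh => PiStep.snd₃ _ _ hh)

end Tm


/-- Proof-irrelevance steps can be postponed over βπ-reduction. -/
theorem Tm.piStep_postponement :
    ∀ t u v : Tm, Tm.PiStep t u → Tm.Step u v →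
      ∃ w, (Tm.Step t w ∨ t = w) ∧ ReflTransGen Tm.PiStep w v := by
  intro t u v hPi hStep
  revert hPi
  induction hStep generalizing t with
  | beta t₀ m n =>
    intro hPi
    cases hPi with
    | appL _ h =>
      cases h with
      | lamT _ h => exact ⟨_, Or.inl (Step.beta _ _ _), ReflTransGen.refl⟩
      | lamM _ h => exact ⟨_, Or.inl (Step.beta _ _ _), ReflTransGen.single h.subst_left⟩
    | appR _ h => exact ⟨_, Or.inl (Step.beta _ _ _), h.subst_right m 0⟩
  | proj t₀ p₀ t₁ p₁ m h =>
    intro hPi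
    cases hPi with
    | fst₁ _ _ h => exact ⟨_, Or.inl (Step.proj _ _ _ _ _ _), ReflTransGen.refl⟩
    | fst₂ _ _ h => exact ⟨_, Or.inl (Step.proj _ _ _ _ _ _), ReflTransGen.refl⟩
    | fst₃ _ _ h =>
      cases h with
      | pi => exact ⟨_, Or.inl (Step.proj _ _ _ _ _ _), ReflTransGen.refl⟩
      | pair₁ _ _ _ h => exact ⟨_, Or.inl (Step.proj _ _ _ _ _ _), ReflTransGen.refl⟩
      | pair₂ _ _ _ h => exact ⟨_, Or.inl (Step.proj _ _ _ _ _ _), ReflTransGen.refl⟩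
      | pair₃ _ _ _ h =>
        exact ⟨_, Or.inl (Step.proj _ _ _ _ _ _), ReflTransGen.single h⟩
  | appL n hS ih =>
    intro hPi
    cases hPi with
    | appL _ h =>
      obtain ⟨w, hw, hrt⟩ := ih _ h
      exact ⟨Tm.app w n, hw.imp (Step.appL n) (congrArg (Tm.app · n)),
        hrt.lift (Tm.app · n) fun _ _ hh => PiStep.appL n hh⟩
    | appR _ h =>
      exact ⟨_, Or.inl (Step.appL _ hS), ReflTransGen.single (PiStep.appR _ h)⟩
  | appR m hS ih =>
    intro hPi
    cases hPi with
    | appR _ h =>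
      obtain ⟨w, hw, hrt⟩ := ih _ h
      exact ⟨Tm.app m w, hw.imp (Step.appR m) (congrArg (Tm.app m)),
        hrt.lift (Tm.app m ·) fun _ _ hh => PiStep.appR m hh⟩
    | appL _ h =>
      exact ⟨_, Or.inl (Step.appR _ hS), ReflTransGen.single (PiStep.appL _ h)⟩
  | lamT m hS ih =>
    intro hPi
    cases hPi with
    | lamT _ h =>
      obtain ⟨w, hw, hrt⟩ := ih _ h
      exact ⟨Tm.lam w m, hw.imp (Step.lamT m) (congrArg (Tm.lam · m)),
        hrt.lift (Tm.lam · m) fun _ _ hh => PiStep.lamT m hh⟩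
    | lamM _ h =>
      exact ⟨_, Or.inl (Step.lamT _ hS), ReflTransGen.single (PiStep.lamM _ h)⟩
  | lamM t₀ hS ih =>
    intro hPi
    cases hPi with
    | lamM _ h =>
      obtain ⟨w, hw, hrt⟩ := ih _ h
      exact ⟨Tm.lam t₀ w, hw.imp (Step.lamM t₀) (congrArg (Tm.lam t₀)),
        hrt.lift (Tm.lam t₀ ·) fun _ _ hh => PiStep.lamM t₀ hh⟩
    | lamT _ h =>
      exact ⟨_, Or.inl (Step.lamM _ hS), ReflTransGen.single (PiStep.lamT _ h)⟩
  | pair₁ p m h hS ih =>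
    intro hPi
    cases hPi with
    | pi => exact ⟨_, Or.inl (Step.pair₁ _ _ _ hS), ReflTransGen.single (PiStep.pi _ _ _ _ _)⟩
    | pair₁ _ _ _ h' =>
      obtain ⟨w, hw, hrt⟩ := ih _ h'
      exact ⟨Tm.pair w p m h, hw.imp (Step.pair₁ p m h) (congrArg (Tm.pair · p m h)),
        hrt.lift (Tm.pair · p m h) fun _ _ hh => PiStep.pair₁ p m h hh⟩
    | pair₂ _ _ _ h' =>
      exact ⟨_, Or.inl (Step.pair₁ _ _ _ hS), ReflTransGen.single (PiStep.pair₂ _ _ _ h')⟩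
    | pair₃ _ _ _ h' =>
      exact ⟨_, Or.inl (Step.pair₁ _ _ _ hS), ReflTransGen.single (PiStep.pair₃ _ _ _ h')⟩
  | pair₂ t₀ m h hS ih =>
    intro hPi
    cases hPi with
    | pi => exact ⟨_, Or.inl (Step.pair₂ _ _ _ hS), ReflTransGen.single (PiStep.pi _ _ _ _ _)⟩
    | pair₂ _ _ _ h' =>
      obtain ⟨w, hw, hrt⟩ := ih _ h'
      exact ⟨Tm.pair t₀ w m h, hw.imp (Step.pair₂ t₀ m h) (congrArg (fun x => Tm.pair t₀ x m h)),
        hrt.lift (fun x => Tm.pair t₀ x m h) fun _ _ hh => PiStep.pair₂ t₀ m h hh⟩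
    | pair₁ _ _ _ h' =>
      exact ⟨_, Or.inl (Step.pair₂ _ _ _ hS), ReflTransGen.single (PiStep.pair₁ _ _ _ h')⟩
    | pair₃ _ _ _ h' =>
      exact ⟨_, Or.inl (Step.pair₂ _ _ _ hS), ReflTransGen.single (PiStep.pair₃ _ _ _ h')⟩
  | pair₃ t₀ p h hS ih =>
    intro hPi
    cases hPi with
    | pi => exact ⟨_, Or.inl (Step.pair₃ _ _ _ hS), ReflTransGen.single (PiStep.pi _ _ _ _ _)⟩
    | pair₃ _ _ _ h' =>
      obtain ⟨w, hw, hrt⟩ := ih _ h'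
      exact ⟨Tm.pair t₀ p w h, hw.imp (Step.pair₃ t₀ p h) (congrArg (fun x => Tm.pair t₀ p x h)),
        hrt.lift (fun x => Tm.pair t₀ p x h) fun _ _ hh => PiStep.pair₃ t₀ p h hh⟩
    | pair₁ _ _ _ h' =>
      exact ⟨_, Or.inl (Step.pair₃ _ _ _ hS), ReflTransGen.single (PiStep.pair₁ _ _ _ h')⟩
    | pair₂ _ _ _ h' =>
      exact ⟨_, Or.inl (Step.pair₃ _ _ _ hS), ReflTransGen.single (PiStep.pair₂ _ _ _ h')⟩
  | pair₄ t₀ p m hS ih =>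
    intro hPi
    cases hPi with
    | pi => exact ⟨_, Or.inr rfl, ReflTransGen.single (PiStep.pi _ _ _ _ _)⟩
    | pair₁ _ _ _ h' =>
      exact ⟨_, Or.inl (Step.pair₄ _ _ _ hS), ReflTransGen.single (PiStep.pair₁ _ _ _ h')⟩
    | pair₂ _ _ _ h' =>
      exact ⟨_, Or.inl (Step.pair₄ _ _ _ hS), ReflTransGen.single (PiStep.pair₂ _ _ _ h')⟩
    | pair₃ _ _ _ h' =>
      exact ⟨_, Or.inl (Step.pair₄ _ _ _ hS), ReflTransGen.single (PiStep.pair₃ _ _ _ h')⟩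
  | fst₁ p m hS ih =>
    intro hPi
    cases hPi with
    | fst₁ _ _ h' =>
      obtain ⟨w, hw, hrt⟩ := ih _ h'
      exact ⟨Tm.fst w p m, hw.imp (Step.fst₁ p m) (congrArg (Tm.fst · p m)),
        hrt.lift (Tm.fst · p m) fun _ _ hh => PiStep.fst₁ p m hh⟩
    | fst₂ _ _ h' =>
      exact ⟨_, Or.inl (Step.fst₁ _ _ hS), ReflTransGen.single (PiStep.fst₂ _ _ h')⟩
    | fst₃ _ _ h' =>
      exact ⟨_, Or.inl (Step.fst₁ _ _ hS), ReflTransGen.single (PiStep.fst₃ _ _ h')⟩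
  | fst₂ t₀ m hS ih =>
    intro hPi
    cases hPi with
    | fst₂ _ _ h' =>
      obtain ⟨w, hw, hrt⟩ := ih _ h'
      exact ⟨Tm.fst t₀ w m, hw.imp (Step.fst₂ t₀ m) (congrArg (fun x => Tm.fst t₀ x m)),
        hrt.lift (fun x => Tm.fst t₀ x m) fun _ _ hh => PiStep.fst₂ t₀ m hh⟩
    | fst₁ _ _ h' =>
      exact ⟨_, Or.inl (Step.fst₂ _ _ hS), ReflTransGen.single (PiStep.fst₁ _ _ h')⟩
    | fst₃ _ _ h' =>
      exact ⟨_, Or.inl (Step.fst₂ _ _ hS), ReflTransGen.single (PiStep.fst₃ _ _ h')⟩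
  | fst₃ t₀ p hS ih =>
    intro hPi
    cases hPi with
    | fst₃ _ _ h' =>
      obtain ⟨w, hw, hrt⟩ := ih _ h'
      exact ⟨Tm.fst t₀ p w, hw.imp (Step.fst₃ t₀ p) (congrArg (Tm.fst t₀ p)),
        hrt.lift (Tm.fst t₀ p ·) fun _ _ hh => PiStep.fst₃ t₀ p hh⟩
    | fst₁ _ _ h' =>
      exact ⟨_, Or.inl (Step.fst₃ _ _ hS), ReflTransGen.single (PiStep.fst₁ _ _ h')⟩
    | fst₂ _ _ h' =>
      exact ⟨_, Or.inl (Step.fst₃ _ _ hS), ReflTransGen.single (PiStep.fst₂ _ _ h')⟩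
  | snd₁ p m hS ih =>
    intro hPi
    cases hPi with
    | snd₁ _ _ h' =>
      obtain ⟨w, hw, hrt⟩ := ih _ h'
      exact ⟨Tm.snd w p m, hw.imp (Step.snd₁ p m) (congrArg (Tm.snd · p m)),
        hrt.lift (Tm.snd · p m) fun _ _ hh => PiStep.snd₁ p m hh⟩
    | snd₂ _ _ h' =>
      exact ⟨_, Or.inl (Step.snd₁ _ _ hS), ReflTransGen.single (PiStep.snd₂ _ _ h')⟩
    | snd₃ _ _ h' =>
      exact ⟨_, Or.inl (Step.snd₁ _ _ hS), ReflTransGen.single (PiStep.snd₃ _ _ h')⟩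
  | snd₂ t₀ m hS ih =>
    intro hPi
    cases hPi with
    | snd₂ _ _ h' =>
      obtain ⟨w, hw, hrt⟩ := ih _ h'
      exact ⟨Tm.snd t₀ w m, hw.imp (Step.snd₂ t₀ m) (congrArg (fun x => Tm.snd t₀ x m)),
        hrt.lift (fun x => Tm.snd t₀ x m) fun _ _ hh => PiStep.snd₂ t₀ m hh⟩
    | snd₁ _ _ h' =>
      exact ⟨_, Or.inl (Step.snd₂ _ _ hS), ReflTransGen.single (PiStep.snd₁ _ _ h')⟩
    | snd₃ _ _ h' =>
      exact ⟨_, Or.inl (Step.snd₂ _ _ hS), ReflTransGen.single (PiStep.snd₃ _ _ h')⟩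
  | snd₃ t₀ p hS ih =>
    intro hPi
    cases hPi with
    | snd₃ _ _ h' =>
      obtain ⟨w, hw, hrt⟩ := ih _ h'
      exact ⟨Tm.snd t₀ p w, hw.imp (Step.snd₃ t₀ p) (congrArg (Tm.snd t₀ p)),
        hrt.lift (Tm.snd t₀ p ·) fun _ _ hh => PiStep.snd₃ t₀ p hh⟩
    | snd₁ _ _ h' =>
      exact ⟨_, Or.inl (Step.snd₃ _ _ hS), ReflTransGen.single (PiStep.snd₁ _ _ h')⟩
    | snd₂ _ _ h' =>
      exact ⟨_, Or.inl (Step.snd₃ _ _ hS), ReflTransGen.single (PiStep.snd₂ _ _ h')⟩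
end

section
/- In the lambda calculus with pair/fst/snd as above, βπ-reduction is confluent modulo the proof-irrelevance equivalence: if t →_{βπ}* u and t →_{βπ}* v, then there exist u', v' with u →_{βπ}* u', v →_{βπ}* v', and u' =_pi v', where =_pi is the reflexive-transitive closure of ↔_pi. -/
namespace Tm

theorem lift_var_lt {d k n : Nat} (h : n < k) : lift d k (var n) = var n := by
  simp [lift, h]

theorem lift_var_ge {d k n : Nat} (h : k ≤ n) : lift d k (var n) = var (n + d) := by
  simp [lift, Nat.not_lt.mpr h]

theorem subst_var_eq {k : Nat} {s : Tm} : subst k s (var k) = lift k 0 s := by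
  simp [subst]

theorem subst_var_gt {k n : Nat} {s : Tm} (h : k < n) : subst k s (var n) = var (n - 1) := by
  simp [subst, Nat.ne_of_gt h, h]

theorem subst_var_lt {k n : Nat} {s : Tm} (h : n < k) : subst k s (var n) = var n := by
  simp [subst, Nat.ne_of_lt h, Nat.not_lt.mpr (Nat.le_of_lt h)]

-- L : i ≤ k → lift d (k + j) (lift j i s) = lift j i (lift d k s)
theorem lift_lift_of_le (s : Tm) : ∀ {d j i k : Nat}, i ≤ k →
    lift d (k + j) (lift j i s) = lift j i (lift d k s) := by
  induction s with
  | var n =>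
    intro d j i k h
    simp only [lift]
    split_ifs <;> simp only [lift] <;> split_ifs <;> simp <;> omega
  | app m n ihm ihn => intro d j i k h; simp [lift, ihm h, ihn h]
  | lam t m iht ihm =>
    intro d j i k h
    simp only [lift]
    rw [iht h]
    have : k + j + 1 = (k+1) + j := by omega
    rw [this, ihm (by omega)]
  | pair t p m hh iht ihp ihm ihh => intro d j i k h; simp [lift, iht h, ihp h, ihm h, ihh h]
  | fst t p m iht ihp ihm => intro d j i k h; simp [lift, iht h, ihp h, ihm h]
  | snd t p m iht ihp ihm => intro d j i k h; simp [lift, iht h, ihp h, ihm h]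

-- L2 : e ≤ i → i ≤ e + k → lift j i (lift k e s) = lift (j + k) e s
theorem lift_lift_add (s : Tm) : ∀ {j i k e : Nat}, e ≤ i → i ≤ e + k →
    lift j i (lift k e s) = lift (j + k) e s := by
  induction s with
  | var n =>
    intro j i k e h1 h2
    simp only [lift]
    split_ifs <;> simp only [lift] <;> split_ifs <;> simp <;> omega
  | app m n ihm ihn => intro j i k e h1 h2; simp [lift, ihm h1 h2, ihn h1 h2]
  | lam t m iht ihm =>
    intro j i k e h1 h2
    simp only [lift, iht h1 h2]
    rw [ihm (by omega) (by omega)]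
  | pair t p m hh iht ihp ihm ihh => intro j i k e h1 h2; simp [lift, iht h1 h2, ihp h1 h2, ihm h1 h2, ihh h1 h2]
  | fst t p m iht ihp ihm => intro j i k e h1 h2; simp [lift, iht h1 h2, ihp h1 h2, ihm h1 h2]
  | snd t p m iht ihp ihm => intro j i k e h1 h2; simp [lift, iht h1 h2, ihp h1 h2, ihm h1 h2]

-- M : i ≤ k → subst (k + j) s (lift j i m) = lift j i (subst k s m)
theorem subst_lift_of_le (m : Tm) : ∀ {s : Tm} {j i k : Nat}, i ≤ k →
    subst (k + j) s (lift j i m) = lift j i (subst k s m) := by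
  induction m with
  | var n =>
    intro s j i k h
    simp only [lift]
    by_cases hni : n < i
    · rw [if_pos hni]
      simp only [subst]
      rw [if_neg (by omega), if_neg (by omega), if_neg (by omega), if_neg (by omega)]
      simp [lift, if_pos hni]
    · rw [if_neg hni]
      rcases Nat.lt_trichotomy n k with hk | hk | hk
      · simp only [subst]
        rw [if_neg (by omega), if_neg (by omega), if_neg (by omega), if_neg (by omega)]
        simp only [lift]
        rw [if_neg (by omega)]
      · subst hk
        simp only [subst]
        rw [if_pos trivial, if_pos trivial, lift_lift_add s (by omega) (by omega)]
        congr 1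
        omega
      · simp only [subst]
        rw [if_neg (by omega), if_pos (by omega), if_neg (by omega), if_pos hk]
        simp only [lift]
        rw [if_neg (by omega)]
        congr 1
        omega
  | app a b iha ihb => intro s j i k h; simp [lift, subst, iha h, ihb h]
  | lam t a iht iha =>
    intro s j i k h
    simp only [lift, subst, iht h]
    have : k + j + 1 = (k+1) + j := by omega
    rw [this, iha (by omega)]
  | pair t p a hh iht ihp iha ihh => intro s j i k h; simp [lift, subst, iht h, ihp h, iha h, ihh h]
  | fst t p a iht ihp iha => intro s j i k h; simp [lift, subst, iht h, ihp h, iha h]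
  | snd t p a iht ihp iha => intro s j i k h; simp [lift, subst, iht h, ihp h, iha h]


-- N : e ≤ i → i < e + j → subst i q (lift j e s) = lift (j - 1) e s
theorem subst_lift_vacuous (s : Tm) : ∀ {q : Tm} {i j e : Nat}, e ≤ i → i < e + j →
    subst i q (lift j e s) = lift (j - 1) e s := by
  induction s with
  | var n =>
    intro q i j e h1 h2
    simp only [lift]
    by_cases hne : n < e
    · rw [if_pos hne]
      simp only [subst]
      rw [if_neg (by omega), if_neg (by omega), if_pos hne]
    · rw [if_neg hne]
      simp only [subst]
      rw [if_neg (by omega), if_pos (by omega), if_neg (by omega)]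
      congr 1
      omega
  | app a b iha ihb => intro q i j e h1 h2; simp [lift, subst, iha h1 h2, ihb h1 h2]
  | lam t a iht iha =>
    intro q i j e h1 h2
    simp only [lift, subst, iht h1 h2]
    rw [iha (by omega) (by omega)]
  | pair t p a hh iht ihp iha ihh => intro q i j e h1 h2; simp [lift, subst, iht h1 h2, ihp h1 h2, iha h1 h2, ihh h1 h2]
  | fst t p a iht ihp iha => intro q i j e h1 h2; simp [lift, subst, iht h1 h2, ihp h1 h2, iha h1 h2]
  | snd t p a iht ihp iha => intro q i j e h1 h2; simp [lift, subst, iht h1 h2, ihp h1 h2, iha h1 h2]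

-- A' : j ≤ k → lift d k (subst j s m) = subst j (lift d (k - j) s) (lift d (k+1) m)
theorem lift_subst (m : Tm) : ∀ {s : Tm} {d j k : Nat}, j ≤ k →
    lift d k (subst j s m) = subst j (lift d (k - j) s) (lift d (k + 1) m) := by
  induction m with
  | var n =>
    intro s d j k h
    rcases Nat.lt_trichotomy n j with hj | hj | hj
    · rw [subst_var_lt hj, lift_var_lt (by omega), lift_var_lt (by omega), subst_var_lt hj]
    · subst hj
      rw [subst_var_eq, lift_var_lt (by omega), subst_var_eq,
        ← lift_lift_of_le s (Nat.zero_le (k - n)) (d := d) (j := n)]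
      congr 1
      omega
    · rw [subst_var_gt hj]
      by_cases hk : n < k + 1
      · rw [lift_var_lt (by omega), lift_var_lt hk, subst_var_gt hj]
      · rw [lift_var_ge (by omega), lift_var_ge (by omega), subst_var_gt (by omega)]
        congr 1
        omega
  | app a b iha ihb => intro s d j k h; simp [lift, subst, iha h, ihb h]
  | lam t a iht iha =>
    intro s d j k h
    simp only [lift, subst, iht h]
    rw [iha (Nat.succ_le_succ h), show k + 1 - (j + 1) = k - j from by omega]
  | pair t p a hh iht ihp iha ihh => intro s d j k h; simp [lift, subst, iht h, ihp h, iha h, ihh h]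
  | fst t p a iht ihp iha => intro s d j k h; simp [lift, subst, iht h, ihp h, iha h]
  | snd t p a iht ihp iha => intro s d j k h; simp [lift, subst, iht h, ihp h, iha h]

-- B' : i ≤ k → subst k s (subst i n m) = subst i (subst (k - i) s n) (subst (k+1) s m)
theorem subst_subst (m : Tm) : ∀ {s n : Tm} {i k : Nat}, i ≤ k →
    subst k s (subst i n m) = subst i (subst (k - i) s n) (subst (k + 1) s m) := by
  induction m with
  | var n₀ =>
    intro s n i k h
    rcases Nat.lt_trichotomy n₀ i with hi | hi | hi
    · rw [subst_var_lt hi, subst_var_lt (by omega), subst_var_lt (by omega), subst_var_lt hi]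
    · subst hi
      rw [subst_var_eq, subst_var_lt (by omega), subst_var_eq,
        ← subst_lift_of_le n (Nat.zero_le (k - n₀)) (j := n₀)]
      congr 1
      omega
    · rw [subst_var_gt hi]
      rcases Nat.lt_trichotomy n₀ (k + 1) with hk | hk | hk
      · rw [subst_var_lt (by omega), subst_var_lt hk, subst_var_gt hi]
      · subst hk
        rw [show k + 1 - 1 = k from rfl, subst_var_eq, subst_var_eq,
          subst_lift_vacuous s (Nat.zero_le _) (by omega), Nat.add_sub_cancel]
      · rw [subst_var_gt (by omega), subst_var_gt (by omega), subst_var_gt (by omega)]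
  | app a b iha ihb => intro s n i k h; simp [subst, iha h, ihb h]
  | lam t a iht iha =>
    intro s n i k h
    simp only [subst, iht h]
    rw [iha (Nat.succ_le_succ h), show k + 1 - (i + 1) = k - i from by omega]
  | pair t p a hh iht ihp iha ihh => intro s n i k h; simp [subst, iht h, ihp h, iha h, ihh h]
  | fst t p a iht ihp iha => intro s n i k h; simp [subst, iht h, ihp h, iha h]
  | snd t p a iht ihp iha => intro s n i k h; simp [subst, iht h, ihp h, iha h]


theorem lift_subst0 (m : Tm) {n : Tm} {d k : Nat} :
    lift d k (subst 0 n m) = subst 0 (lift d k n) (lift d (k + 1) m) := by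
  simpa using lift_subst m (s := n) (d := d) (k := k) (Nat.zero_le k)

theorem subst_subst0 (m : Tm) {s n : Tm} {k : Nat} :
    subst k s (subst 0 n m) = subst 0 (subst k s n) (subst (k + 1) s m) := by
  simpa using subst_subst m (s := s) (n := n) (k := k) (Nat.zero_le k)

/-- Parallel reduction. -/
inductive Par : Tm → Tm → Prop
  | var (n) : Par (var n) (var n)
  | app {m m' n n'} : Par m m' → Par n n' → Par (app m n) (app m' n')
  | lam {t t' m m'} : Par t t' → Par m m' → Par (lam t m) (lam t' m')
  | pair {t t' p p' m m' h h'} : Par t t' → Par p p' → Par m m' → Par h h' →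
      Par (pair t p m h) (pair t' p' m' h')
  | fst {t t' p p' m m'} : Par t t' → Par p p' → Par m m' → Par (fst t p m) (fst t' p' m')
  | snd {t t' p p' m m'} : Par t t' → Par p p' → Par m m' → Par (snd t p m) (snd t' p' m')
  | beta {t t' m m' n n'} : Par t t' → Par m m' → Par n n' →
      Par (app (lam t m) n) (subst 0 n' m')
  | proj {t₀ p₀ t₁ p₁ m m' h} : Par m m' → Par (fst t₀ p₀ (pair t₁ p₁ m h)) m'

theorem par_refl : ∀ m : Tm, Par m m := by
  intro m
  induction m with
  | var n => exact Par.var n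
  | app a b iha ihb => exact Par.app iha ihb
  | lam t a iht iha => exact Par.lam iht iha
  | pair t p a h iht ihp iha ihh => exact Par.pair iht ihp iha ihh
  | fst t p a iht ihp iha => exact Par.fst iht ihp iha
  | snd t p a iht ihp iha => exact Par.snd iht ihp iha

theorem par_lift {a b : Tm} (h : Par a b) : ∀ {d k : Nat}, Par (lift d k a) (lift d k b) := by
  induction h with
  | var n => intro d k; simp only [lift]; split_ifs <;> exact par_refl _
  | app _ _ ihm ihn => intro d k; exact Par.app ihm ihn
  | lam _ _ iht ihm => intro d k; exact Par.lam iht ihm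
  | pair _ _ _ _ iht ihp ihm ihh => intro d k; exact Par.pair iht ihp ihm ihh
  | fst _ _ _ iht ihp ihm => intro d k; exact Par.fst iht ihp ihm
  | snd _ _ _ iht ihp ihm => intro d k; exact Par.snd iht ihp ihm
  | beta _ _ _ iht ihm ihn =>
    intro d k
    simp only [lift, lift_subst0]
    exact Par.beta iht ihm ihn
  | proj _ ihm => intro d k; simp only [lift]; exact Par.proj ihm

theorem par_subst {s s' a b : Tm} (hs : Par s s') (h : Par a b) :
    ∀ {k : Nat}, Par (subst k s a) (subst k s' b) := by
  induction h with
  | var n =>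
    intro k
    simp only [subst]
    split_ifs <;> first | exact par_lift hs | exact par_refl _
  | app _ _ ihm ihn => intro k; exact Par.app ihm ihn
  | lam _ _ iht ihm => intro k; exact Par.lam iht ihm
  | pair _ _ _ _ iht ihp ihm ihh => intro k; exact Par.pair iht ihp ihm ihh
  | fst _ _ _ iht ihp ihm => intro k; exact Par.fst iht ihp ihm
  | snd _ _ _ iht ihp ihm => intro k; exact Par.snd iht ihp ihm
  | beta _ _ _ iht ihm ihn =>
    intro k
    simp only [subst, subst_subst0]
    exact Par.beta iht ihm ihn
  | proj _ ihm => intro k; simp only [subst]; exact Par.proj ihm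

theorem par_lam_inv {t m x : Tm} (h : Par (lam t m) x) :
    ∃ t' m', x = lam t' m' ∧ Par t t' ∧ Par m m' := by
  cases h with
  | lam ht hm => exact ⟨_, _, rfl, ht, hm⟩

theorem par_pair_inv {t p m hh x : Tm} (h : Par (pair t p m hh) x) :
    ∃ t' p' m' hh', x = pair t' p' m' hh' ∧ Par t t' ∧ Par p p' ∧ Par m m' ∧ Par hh hh' := by
  cases h with
  | pair ht hp hm hh => exact ⟨_, _, _, _, rfl, ht, hp, hm, hh⟩

theorem par_diamond : ∀ {a b c : Tm}, Par a b → Par a c → ∃ d, Par b d ∧ Par c d := by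
  intro a b c hab
  induction hab generalizing c with
  | var n =>
    intro hac
    cases hac
    exact ⟨_, Par.var n, Par.var n⟩
  | app hm hn ihm ihn =>
    intro hac
    cases hac with
    | app hm2 hn2 =>
      obtain ⟨dm, h1, h2⟩ := ihm hm2
      obtain ⟨dn, h3, h4⟩ := ihn hn2
      exact ⟨_, Par.app h1 h3, Par.app h2 h4⟩
    | beta ht2 hm2 hn2 =>
      obtain ⟨d1, hd1, hd2⟩ := ihm (Par.lam ht2 hm2)
      obtain ⟨dn, h3, h4⟩ := ihn hn2
      obtain ⟨t1, m1, rfl, ht1, hm1⟩ := par_lam_inv hm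
      obtain ⟨td, md, rfl, htd, hmd⟩ := par_lam_inv hd2
      obtain ⟨td', md', heq, htd', hmd'⟩ := par_lam_inv hd1
      cases heq
      exact ⟨_, Par.beta htd' hmd' h3, par_subst h4 hmd⟩
  | lam ht hm iht ihm =>
    intro hac
    cases hac with
    | lam ht2 hm2 =>
      obtain ⟨dt, h1, h2⟩ := iht ht2
      obtain ⟨dm, h3, h4⟩ := ihm hm2
      exact ⟨_, Par.lam h1 h3, Par.lam h2 h4⟩
  | pair ht hp hm hh iht ihp ihm ihh =>
    intro hac
    cases hac with
    | pair ht2 hp2 hm2 hh2 =>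
      obtain ⟨dt, h1, h2⟩ := iht ht2
      obtain ⟨dp, h3, h4⟩ := ihp hp2
      obtain ⟨dm, h5, h6⟩ := ihm hm2
      obtain ⟨dh, h7, h8⟩ := ihh hh2
      exact ⟨_, Par.pair h1 h3 h5 h7, Par.pair h2 h4 h6 h8⟩
  | fst ht hp hm iht ihp ihm =>
    intro hac
    cases hac with
    | fst ht2 hp2 hm2 =>
      obtain ⟨dt, h1, h2⟩ := iht ht2
      obtain ⟨dp, h3, h4⟩ := ihp hp2
      obtain ⟨dm, h5, h6⟩ := ihm hm2
      exact ⟨_, Par.fst h1 h3 h5, Par.fst h2 h4 h6⟩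
    | proj hm2 =>
      obtain ⟨d1, hd1, hd2⟩ := ihm (Par.pair (par_refl _) (par_refl _) hm2 (par_refl _))
      obtain ⟨t1, p1, m1, hh1, rfl, ht1, hp1, hm1, hh1'⟩ := par_pair_inv hm
      obtain ⟨td, pd, md, hhd, rfl, htd, hpd, hmd, hhd'⟩ := par_pair_inv hd2
      obtain ⟨td', pd', md', hhd'', heq, _, _, hmd', _⟩ := par_pair_inv hd1
      cases heq
      exact ⟨_, Par.proj hmd', hmd⟩
  | snd ht hp hm iht ihp ihm =>
    intro hac
    cases hac with
    | snd ht2 hp2 hm2 =>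
      obtain ⟨dt, h1, h2⟩ := iht ht2
      obtain ⟨dp, h3, h4⟩ := ihp hp2
      obtain ⟨dm, h5, h6⟩ := ihm hm2
      exact ⟨_, Par.snd h1 h3 h5, Par.snd h2 h4 h6⟩
  | beta ht hm hn iht ihm ihn =>
    intro hac
    cases hac with
    | app hm2 hn2 =>
      obtain ⟨t2, mm2, rfl, ht2, hmm2⟩ := par_lam_inv hm2
      obtain ⟨td, h1, h2⟩ := iht ht2
      obtain ⟨md, h3, h4⟩ := ihm hmm2
      obtain ⟨nd, h5, h6⟩ := ihn hn2
      exact ⟨_, par_subst h5 h3, Par.beta h2 h4 h6⟩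
    | beta ht2 hm2 hn2 =>
      obtain ⟨md, h3, h4⟩ := ihm hm2
      obtain ⟨nd, h5, h6⟩ := ihn hn2
      exact ⟨_, par_subst h5 h3, par_subst h6 h4⟩
  | proj hm ihm =>
    intro hac
    cases hac with
    | fst ht2 hp2 hm2 =>
      obtain ⟨t2, p2, m2, h2, rfl, ht2', hp2', hm2', hh2'⟩ := par_pair_inv hm2
      obtain ⟨d, hd1, hd2⟩ := ihm hm2'
      exact ⟨_, hd1, Par.proj hd2⟩
    | proj hm2 =>
      obtain ⟨d, hd1, hd2⟩ := ihm hm2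
      exact ⟨_, hd1, hd2⟩


theorem step_par {a b : Tm} (h : Step a b) : Par a b := by
  induction h with
  | beta t m n => exact Par.beta (par_refl t) (par_refl m) (par_refl n)
  | proj t₀ p₀ t₁ p₁ m hh => exact Par.proj (par_refl m)
  | appL n _ ih => exact Par.app ih (par_refl n)
  | appR m _ ih => exact Par.app (par_refl m) ih
  | lamT m _ ih => exact Par.lam ih (par_refl m)
  | lamM t _ ih => exact Par.lam (par_refl t) ih
  | pair₁ p m hh _ ih => exact Par.pair ih (par_refl p) (par_refl m) (par_refl hh)
  | pair₂ t m hh _ ih => exact Par.pair (par_refl t) ih (par_refl m) (par_refl hh)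
  | pair₃ t p hh _ ih => exact Par.pair (par_refl t) (par_refl p) ih (par_refl hh)
  | pair₄ t p m _ ih => exact Par.pair (par_refl t) (par_refl p) (par_refl m) ih
  | fst₁ p m _ ih => exact Par.fst ih (par_refl p) (par_refl m)
  | fst₂ t m _ ih => exact Par.fst (par_refl t) ih (par_refl m)
  | fst₃ t p _ ih => exact Par.fst (par_refl t) (par_refl p) ih
  | snd₁ p m _ ih => exact Par.snd ih (par_refl p) (par_refl m)
  | snd₂ t m _ ih => exact Par.snd (par_refl t) ih (par_refl m)
  | snd₃ t p _ ih => exact Par.snd (par_refl t) (par_refl p) ih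

open Relation

theorem steps_congr {f : Tm → Tm} (hf : ∀ {x y : Tm}, Step x y → Step (f x) (f y))
    {a b : Tm} (h : ReflTransGen Step a b) : ReflTransGen Step (f a) (f b) := by
  induction h with
  | refl => exact ReflTransGen.refl
  | tail _ h2 ih => exact ih.tail (hf h2)

theorem steps_app {m m' n n' : Tm} (hm : ReflTransGen Step m m') (hn : ReflTransGen Step n n') :
    ReflTransGen Step (app m n) (app m' n') :=
  (steps_congr (fun h => Step.appL _ h) hm).trans (steps_congr (fun h => Step.appR _ h) hn)

theorem steps_lam {t t' m m' : Tm} (ht : ReflTransGen Step t t') (hm : ReflTransGen Step m m') :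
    ReflTransGen Step (lam t m) (lam t' m') :=
  (steps_congr (fun h => Step.lamT _ h) ht).trans (steps_congr (fun h => Step.lamM _ h) hm)

theorem steps_pair {t t' p p' m m' h h' : Tm} (ht : ReflTransGen Step t t')
    (hp : ReflTransGen Step p p') (hm : ReflTransGen Step m m')
    (hh : ReflTransGen Step h h') :
    ReflTransGen Step (pair t p m h) (pair t' p' m' h') :=
  (((steps_congr (fun s => Step.pair₁ _ _ _ s) ht).trans
    (steps_congr (fun s => Step.pair₂ _ _ _ s) hp)).trans
    (steps_congr (fun s => Step.pair₃ _ _ _ s) hm)).trans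
    (steps_congr (fun s => Step.pair₄ _ _ _ s) hh)

theorem steps_fst {t t' p p' m m' : Tm} (ht : ReflTransGen Step t t')
    (hp : ReflTransGen Step p p') (hm : ReflTransGen Step m m') :
    ReflTransGen Step (fst t p m) (fst t' p' m') :=
  ((steps_congr (fun s => Step.fst₁ _ _ s) ht).trans
    (steps_congr (fun s => Step.fst₂ _ _ s) hp)).trans
    (steps_congr (fun s => Step.fst₃ _ _ s) hm)

theorem steps_snd {t t' p p' m m' : Tm} (ht : ReflTransGen Step t t')
    (hp : ReflTransGen Step p p') (hm : ReflTransGen Step m m') :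
    ReflTransGen Step (snd t p m) (snd t' p' m') :=
  ((steps_congr (fun s => Step.snd₁ _ _ s) ht).trans
    (steps_congr (fun s => Step.snd₂ _ _ s) hp)).trans
    (steps_congr (fun s => Step.snd₃ _ _ s) hm)

theorem par_steps {a b : Tm} (h : Par a b) : ReflTransGen Step a b := by
  induction h with
  | var n => exact ReflTransGen.refl
  | app _ _ ihm ihn => exact steps_app ihm ihn
  | lam _ _ iht ihm => exact steps_lam iht ihm
  | pair _ _ _ _ iht ihp ihm ihh => exact steps_pair iht ihp ihm ihh
  | fst _ _ _ iht ihp ihm => exact steps_fst iht ihp ihm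
  | snd _ _ _ iht ihp ihm => exact steps_snd iht ihp ihm
  | beta _ _ _ iht ihm ihn =>
    exact (steps_app (steps_lam iht ihm) ihn).tail (Step.beta _ _ _)
  | proj _ ihm => exact ReflTransGen.head (Step.proj _ _ _ _ _ _) ihm

theorem par_strip {a b c : Tm} (hab : Par a b) (hac : ReflTransGen Par a c) :
    ∃ d, ReflTransGen Par b d ∧ Par c d := by
  induction hac with
  | refl => exact ⟨b, ReflTransGen.refl, hab⟩
  | tail _ h2 ih =>
    obtain ⟨d, hd1, hd2⟩ := ih
    obtain ⟨e, he1, he2⟩ := par_diamond hd2 h2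
    exact ⟨e, hd1.tail he1, he2⟩

theorem par_confluent {a b c : Tm} (hab : ReflTransGen Par a b) (hac : ReflTransGen Par a c) :
    ∃ d, ReflTransGen Par b d ∧ ReflTransGen Par c d := by
  induction hab with
  | refl => exact ⟨c, hac, ReflTransGen.refl⟩
  | tail _ h2 ih =>
    obtain ⟨d, hd1, hd2⟩ := ih
    obtain ⟨e, he1, he2⟩ := par_strip h2 hd1
    exact ⟨e, he1, hd2.tail he2⟩

theorem steps_to_pars {a b : Tm} (h : ReflTransGen Step a b) : ReflTransGen Par a b := by
  induction h with
  | refl => exact ReflTransGen.refl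
  | tail _ h2 ih => exact ih.tail (step_par h2)

theorem pars_to_steps {a b : Tm} (h : ReflTransGen Par a b) : ReflTransGen Step a b := by
  induction h with
  | refl => exact ReflTransGen.refl
  | tail _ h2 ih => exact ih.trans (par_steps h2)

theorem step_confluent {t u v : Tm} (h1 : ReflTransGen Step t u) (h2 : ReflTransGen Step t v) :
    ∃ d, ReflTransGen Step u d ∧ ReflTransGen Step v d := by
  obtain ⟨d, hd1, hd2⟩ := par_confluent (steps_to_pars h1) (steps_to_pars h2)
  exact ⟨d, pars_to_steps hd1, pars_to_steps hd2⟩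

end Tm

open Relation

/-- βπ-reduction is confluent modulo the proof-irrelevance equivalence. -/
theorem Tm.step_confluent_modulo_pi :
    ∀ t u v : Tm, ReflTransGen Tm.Step t u → ReflTransGen Tm.Step t v →
      ∃ u' v', ReflTransGen Tm.Step u u' ∧ ReflTransGen Tm.Step v v' ∧
        ReflTransGen Tm.PiStep u' v' := by
  intro t u v h1 h2
  obtain ⟨d, hd1, hd2⟩ := Tm.step_confluent h1 h2
  exact ⟨d, d, hd1, hd2, ReflTransGen.refl⟩
end
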